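/- arXiv:2103.12629 — 2 statements merged into one kernel-verified Lean document; each statement's English description precedes it below -/
import Mathlib

section
/- Let L be a closed Riemannian manifold and suppose v(t,x) = e^{iλt} Σ_{j=0}^d a_j(x) t^j is a nontrivial solution of ∂_t^2 v + 2 ∂_t v + Δ_{g_L} v = 0 on ℝ × L, where a_j are smooth functions on L and λ ∈ ℂ. Then the leading coefficient satisfies Δ_{g_L} a_d + (−λ^2 + 2iλ) a_d = 0, hence −λ^2 + 2iλ is real and nonnegative, and consequently Im λ ∉ (0,2). -/
lemma expMonomial_hasDerivAt (lam c : ℂ) (n : ℕ) (t : ℝ) :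
    HasDerivAt (fun s : ℝ => c * (s : ℂ) ^ n * Complex.exp (Complex.I * lam * s))
      (c * n * (t : ℂ) ^ (n - 1) * Complex.exp (Complex.I * lam * t)
        + Complex.I * lam * c * (t : ℂ) ^ n * Complex.exp (Complex.I * lam * t)) t := by
  have hexp : HasDerivAt (fun z : ℂ => Complex.exp (Complex.I * lam * z))
      (Complex.exp (Complex.I * lam * (t : ℂ)) * (Complex.I * lam)) (t : ℂ) := by
    simpa using ((hasDerivAt_id ((t : ℝ) : ℂ)).const_mul (Complex.I * lam)).cexp
  have hpow : HasDerivAt (fun z : ℂ => c * z ^ n) (c * (n * (t : ℂ) ^ (n - 1))) (t : ℂ) :=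
    (hasDerivAt_pow n _).const_mul c
  have h := (hpow.mul hexp).comp_ofReal
  convert h using 1
  · ext s; rw [Pi.mul_apply]
  ring

lemma expMonomial_smul_hasDerivAt {E : Type*} [NormedAddCommGroup E] [NormedSpace ℂ E]
    (lam c : ℂ) (n : ℕ) (x : E) (t : ℝ) :
    HasDerivAt (fun s : ℝ => (c * (s : ℂ) ^ n * Complex.exp (Complex.I * lam * s)) • x)
      ((c * n * (t : ℂ) ^ (n - 1) * Complex.exp (Complex.I * lam * t)
        + Complex.I * lam * c * (t : ℂ) ^ n * Complex.exp (Complex.I * lam * t)) • x) t :=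
  (expMonomial_hasDerivAt lam c n t).smul_const x

lemma imlam_not_mem_Ioo (lam : ℂ) (him : (-lam ^ 2 + 2 * Complex.I * lam).im = 0)
    (hre : 0 ≤ (-lam ^ 2 + 2 * Complex.I * lam).re) : lam.im ∉ Set.Ioo (0 : ℝ) 2 := by
  rintro ⟨hy1, hy2⟩
  have e1 : (-lam ^ 2 + 2 * Complex.I * lam).im = 2 * lam.re * (1 - lam.im) := by
    rw [pow_two]
    simp only [Complex.add_im, Complex.neg_im, Complex.mul_im, Complex.mul_re,
      Complex.I_re, Complex.I_im, Complex.re_ofNat, Complex.im_ofNat]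
    ring
  have e2 : (-lam ^ 2 + 2 * Complex.I * lam).re
      = lam.im ^ 2 - lam.re ^ 2 - 2 * lam.im := by
    rw [pow_two]
    simp only [Complex.add_re, Complex.neg_re, Complex.mul_im, Complex.mul_re,
      Complex.I_re, Complex.I_im, Complex.re_ofNat, Complex.im_ofNat]
    ring
  rw [e1] at him
  rw [e2] at hre
  rcases mul_eq_zero.mp him with h | h
  · rcases mul_eq_zero.mp h with h' | h'
    · norm_num at h'
    · nlinarith [mul_pos hy1 (by linarith : (0:ℝ) < 2 - lam.im), sq_nonneg lam.re]
  · have hyy : lam.im = 1 := by linarith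
    nlinarith [sq_nonneg lam.re]

/-- Indicial roots of the translation-invariant drift Laplacian on a cylinder `ℝ × L`.
The functions on the closed manifold `L` are modelled by a complex inner product space
`E`, and the Laplace–Beltrami operator `Δ_{g_L}` by a symmetric, negative semi-definite
linear operator `Δ` on `E`.  If
`v(t) = e^{iλt} Σ_{j=0}^d t^j • a_j` is a nontrivial (leading coefficient `a_d ≠ 0`)
solution of `v'' + 2v' + Δ v = 0`, then the leading coefficient satisfies
`Δ a_d + (-λ² + 2iλ) a_d = 0`, hence `-λ² + 2iλ` is real and nonnegative, and
consequently `Im λ ∉ (0,2)`. -/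
theorem drift_laplacian_no_critical_weight {E : Type*} [NormedAddCommGroup E]
    [InnerProductSpace ℂ E]
    (Δ : E →ₗ[ℂ] E)
    (hsym : ∀ u w : E, (inner ℂ (Δ u) w : ℂ) = inner ℂ u (Δ w))
    (hneg : ∀ u : E, (inner ℂ (Δ u) u : ℂ).re ≤ 0)
    (d : ℕ) (a : Fin (d + 1) → E) (lam : ℂ)
    (hlead : a (Fin.last d) ≠ 0)
    (hsol : ∀ t : ℝ,
      deriv (deriv (fun t : ℝ =>
          ∑ j : Fin (d + 1), ((t : ℂ) ^ (j : ℕ) * Complex.exp (Complex.I * lam * t)) • a j)) t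
        + (2 : ℝ) • deriv (fun t : ℝ =>
          ∑ j : Fin (d + 1), ((t : ℂ) ^ (j : ℕ) * Complex.exp (Complex.I * lam * t)) • a j) t
        + Δ (∑ j : Fin (d + 1), ((t : ℂ) ^ (j : ℕ) * Complex.exp (Complex.I * lam * t)) • a j)
        = 0) :
    Δ (a (Fin.last d)) + (-lam ^ 2 + 2 * Complex.I * lam) • a (Fin.last d) = 0
      ∧ (-lam ^ 2 + 2 * Complex.I * lam).im = 0
      ∧ 0 ≤ (-lam ^ 2 + 2 * Complex.I * lam).re
      ∧ lam.im ∉ Set.Ioo (0 : ℝ) 2 := by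
  set v : ℝ → E := fun t : ℝ =>
      ∑ j : Fin (d + 1), ((t : ℂ) ^ (j : ℕ) * Complex.exp (Complex.I * lam * t)) • a j with hvdef
  set v1 : ℝ → E := fun t : ℝ =>
      ∑ j : Fin (d + 1),
        ((((j : ℕ) : ℂ) * (t : ℂ) ^ ((j : ℕ) - 1) * Complex.exp (Complex.I * lam * t)) • a j
          + (Complex.I * lam * (t : ℂ) ^ (j : ℕ) * Complex.exp (Complex.I * lam * t)) • a j)
    with hv1def
  set v2 : ℝ → E := fun t : ℝ =>
      ∑ j : Fin (d + 1),
        (((((j : ℕ) : ℂ) * (((j : ℕ) - 1 : ℕ) : ℂ) * (t : ℂ) ^ ((j : ℕ) - 1 - 1)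
              * Complex.exp (Complex.I * lam * t)
            + Complex.I * lam * (((j : ℕ) : ℂ)) * (t : ℂ) ^ ((j : ℕ) - 1)
              * Complex.exp (Complex.I * lam * t)) • a j)
          + ((Complex.I * lam * (((j : ℕ) : ℂ)) * (t : ℂ) ^ ((j : ℕ) - 1)
              * Complex.exp (Complex.I * lam * t)
            + Complex.I * lam * (Complex.I * lam) * (t : ℂ) ^ (j : ℕ)
              * Complex.exp (Complex.I * lam * t)) • a j))
    with hv2def
  have hv1 : ∀ t : ℝ, HasDerivAt v (v1 t) t := by
    intro t
    rw [hvdef, hv1def]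
    refine HasDerivAt.fun_sum fun j _ => ?_
    simpa [add_smul] using expMonomial_smul_hasDerivAt lam 1 (j : ℕ) (a j) t
  have hv2 : ∀ t : ℝ, HasDerivAt v1 (v2 t) t := by
    intro t
    rw [hv1def, hv2def]
    exact HasDerivAt.fun_sum fun j _ =>
      (expMonomial_smul_hasDerivAt lam (((j : ℕ) : ℂ)) ((j : ℕ) - 1) (a j) t).add
        (expMonomial_smul_hasDerivAt lam (Complex.I * lam) (j : ℕ) (a j) t)
  -- the polynomial part of the equation
  set B : ℝ → E := fun t : ℝ =>
      ∑ j : Fin (d + 1),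
        (((((j : ℕ) : ℂ) * (((j : ℕ) - 1 : ℕ) : ℂ) * (t : ℂ) ^ ((j : ℕ) - 1 - 1)
            + (2 * (Complex.I * lam) * (((j : ℕ) : ℂ)) + 2 * (((j : ℕ) : ℂ)))
                * (t : ℂ) ^ ((j : ℕ) - 1)
            + (Complex.I * lam * (Complex.I * lam) + 2 * (Complex.I * lam))
                * (t : ℂ) ^ (j : ℕ)) • a j)
          + ((t : ℂ) ^ (j : ℕ)) • Δ (a j))
    with hBdef
  have hB : ∀ t : ℝ, B t = 0 := by
    intro t
    have h0 := hsol t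
    rw [funext fun s => (hv1 s).deriv] at h0
    rw [(hv2 t).deriv] at h0
    have hkey : v2 t + (2 : ℝ) • v1 t + Δ (v t) = Complex.exp (Complex.I * lam * t) • B t := by
      rw [hvdef, hv1def, hv2def, hBdef]
      simp only [map_sum, map_smul, Finset.smul_sum, ← Finset.sum_add_distrib]
      refine Finset.sum_congr rfl fun j _ => ?_
      have h2 : ∀ x : E, (2 : ℝ) • x = (2 : ℂ) • x := fun x => by
        rw [← Complex.coe_smul]; norm_num
      rw [h2]
      match_scalars <;> ring
    rw [hkey] at h0
    rcases smul_eq_zero.mp h0 with h | h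
    · exact absurd h (Complex.exp_ne_zero _)
    · exact h
  -- pair with w
  set w : E := Δ (a (Fin.last d)) + (-lam ^ 2 + 2 * Complex.I * lam) • a (Fin.last d) with hwdef
  have hφ : ∀ t : ℝ,
      ∑ j : Fin (d + 1),
        ((((j : ℕ) : ℂ) * (((j : ℕ) - 1 : ℕ) : ℂ) * (t : ℂ) ^ ((j : ℕ) - 1 - 1)
            + (2 * (Complex.I * lam) * (((j : ℕ) : ℂ)) + 2 * (((j : ℕ) : ℂ)))
                * (t : ℂ) ^ ((j : ℕ) - 1)
            + (Complex.I * lam * (Complex.I * lam) + 2 * (Complex.I * lam))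
                * (t : ℂ) ^ (j : ℕ)) * (inner ℂ w (a j) : ℂ)
          + ((t : ℂ) ^ (j : ℕ)) * (inner ℂ w (Δ (a j)) : ℂ)) = 0 := by
    intro t
    have h0 : (inner ℂ w (B t) : ℂ) = 0 := by rw [hB t, inner_zero_right]
    rw [hBdef] at h0
    simpa [inner_sum, inner_add_right, inner_smul_right] using h0
  set Q : Polynomial ℂ :=
      ∑ j : Fin (d + 1),
        (Polynomial.C ((((j : ℕ) : ℂ) * (((j : ℕ) - 1 : ℕ) : ℂ)) * (inner ℂ w (a j) : ℂ))
            * Polynomial.X ^ ((j : ℕ) - 1 - 1)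
          + Polynomial.C ((2 * (Complex.I * lam) * (((j : ℕ) : ℂ)) + 2 * (((j : ℕ) : ℂ)))
              * (inner ℂ w (a j) : ℂ)) * Polynomial.X ^ ((j : ℕ) - 1)
          + Polynomial.C ((Complex.I * lam * (Complex.I * lam) + 2 * (Complex.I * lam))
              * (inner ℂ w (a j) : ℂ) + (inner ℂ w (Δ (a j)) : ℂ)) * Polynomial.X ^ (j : ℕ))
    with hQdef
  have heval : ∀ t : ℝ, Q.IsRoot ((t : ℝ) : ℂ) := by
    intro t
    rw [hQdef]
    simp only [Polynomial.IsRoot, Polynomial.eval_finset_sum, Polynomial.eval_add,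
      Polynomial.eval_mul, Polynomial.eval_C, Polynomial.eval_pow, Polynomial.eval_X]
    rw [← hφ t]
    exact Finset.sum_congr rfl fun j _ => by ring
  have hQ0 : Q = 0 :=
    Polynomial.eq_zero_of_infinite_isRoot _
      (Set.infinite_of_injective_forall_mem Complex.ofReal_injective heval)
  have hcoeff : (Complex.I * lam * (Complex.I * lam) + 2 * (Complex.I * lam))
      * (inner ℂ w (a (Fin.last d)) : ℂ) + (inner ℂ w (Δ (a (Fin.last d))) : ℂ) = 0 := by
    have hc : Q.coeff d = 0 := by rw [hQ0, Polynomial.coeff_zero]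
    rw [hQdef, Polynomial.finset_sum_coeff] at hc
    rw [Finset.sum_eq_single (Fin.last d)] at hc
    · rw [Fin.val_last] at hc
      rcases Nat.eq_zero_or_pos d with hd | hd
      · subst hd
        simpa using hc
      · simp only [Polynomial.coeff_add, Polynomial.coeff_C_mul, Polynomial.coeff_X_pow,
          show ¬ (d = d - 1 - 1) by omega, show ¬ (d = d - 1) by omega,
          show ¬ (d - 1 - 1 = d) by omega, show ¬ (d - 1 = d) by omega] at hc
        simpa using hc
    · intro j _ hj
      have hjd : (j : ℕ) < d := Fin.val_lt_last hj
      simp only [Polynomial.coeff_add, Polynomial.coeff_C_mul, Polynomial.coeff_X_pow]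
      rw [if_neg (by omega), if_neg (by omega), if_neg (by omega)]
      ring
    · intro h
      exact absurd (Finset.mem_univ _) h
  have hIlam : Complex.I * lam * (Complex.I * lam) + 2 * (Complex.I * lam)
      = -lam ^ 2 + 2 * Complex.I * lam := by
    linear_combination lam ^ 2 * Complex.I_mul_I
  have hw0 : w = 0 := by
    have h5 : (inner ℂ w w : ℂ) = 0 := by
      nth_rewrite 2 [hwdef]
      rw [inner_add_right, inner_smul_right, ← hIlam]
      linear_combination hcoeff
    exact inner_self_eq_zero.mp h5
  have hfirst : Δ (a (Fin.last d)) + (-lam ^ 2 + 2 * Complex.I * lam) • a (Fin.last d) = 0 := by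
    rw [← hwdef]; exact hw0
  have hΔA : Δ (a (Fin.last d)) = -((-lam ^ 2 + 2 * Complex.I * lam) • a (Fin.last d)) :=
    eq_neg_of_add_eq_zero_left hfirst
  have hip : (inner ℂ (a (Fin.last d)) (Δ (a (Fin.last d))) : ℂ)
      = -((-lam ^ 2 + 2 * Complex.I * lam) * ((‖a (Fin.last d)‖ : ℂ)) ^ 2) := by
    rw [hΔA, inner_neg_right, inner_smul_right, inner_self_eq_norm_sq_to_K]
    norm_cast
  have hnorm : (0 : ℝ) < ‖a (Fin.last d)‖ ^ 2 :=
    pow_pos (norm_pos_iff.mpr hlead) 2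
  have hreal : (inner ℂ (a (Fin.last d)) (Δ (a (Fin.last d))) : ℂ).im = 0 := by
    refine Complex.conj_eq_iff_im.mp ?_
    rw [inner_conj_symm, hsym]
  have hcast : ((‖a (Fin.last d)‖ : ℂ)) ^ 2 = ((‖a (Fin.last d)‖ ^ 2 : ℝ) : ℂ) := by
    push_cast; ring
  have him : (-lam ^ 2 + 2 * Complex.I * lam).im = 0 := by
    have h6 := congrArg Complex.im hip
    rw [hreal, hcast] at h6
    simp only [Complex.neg_im, Complex.mul_im, Complex.ofReal_re, Complex.ofReal_im,
      mul_zero, add_zero, zero_add] at h6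
    have h9 : (-lam ^ 2 + 2 * Complex.I * lam).im * ‖a (Fin.last d)‖ ^ 2 = 0 := by linarith
    rcases mul_eq_zero.mp h9 with h | h
    · exact h
    · exact absurd h (ne_of_gt hnorm)
  have hre : 0 ≤ (-lam ^ 2 + 2 * Complex.I * lam).re := by
    have h7 := hneg (a (Fin.last d))
    rw [hsym, hip, hcast] at h7
    simp only [Complex.neg_re, Complex.mul_re, Complex.ofReal_re, Complex.ofReal_im,
      mul_zero, sub_zero] at h7
    have h8 : 0 ≤ (-lam ^ 2 + 2 * Complex.I * lam).re * ‖a (Fin.last d)‖ ^ 2 := by linarith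
    by_contra hcon
    push_neg at hcon
    nlinarith [h8, hnorm]
  exact ⟨hfirst, him, hre, imlam_not_mem_Ioo lam him hre⟩
end

section
/- Let (M,g) be a complete Riemannian manifold, X a complete vector field with flow (Φ_τ), and φ a bounded C^2 function on M such that φ(Φ_τ(x)) has limits as τ → ±∞ for every x. If sup_M φ ≤ A, inf_M φ ≥ −A and (X∘X)(φ) ≥ −B on M for constants A, B ≥ 0, then X(φ)(x) ≤ 4A + B for every x ∈ M. -/
private lemma aux_bound (f : ℝ → ℝ) (A B : ℝ) (hA : 0 ≤ A) (hB : 0 ≤ B)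
    (hC2 : ContDiff ℝ 2 f) (hbd : ∀ τ, |f τ| ≤ A)
    (hXX : ∀ τ : ℝ, -B ≤ deriv (deriv f) τ) : deriv f 0 ≤ 4 * A + B := by
  set c := deriv f 0 with hc
  have hf : Differentiable ℝ f := hC2.differentiable (by norm_num)
  have hf' : Differentiable ℝ (deriv f) := by
    have h : ContDiff ℝ ((1 : ℕ∞) + 1) f := by exact_mod_cast hC2
    have := (contDiff_succ_iff_deriv.mp h).2.2
    exact this.differentiable (by norm_num)
  -- g is the derivative of v below
  set g : ℝ → ℝ := fun τ => deriv f τ - c + B * τ with hg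
  have hgderiv : ∀ σ : ℝ, HasDerivAt g (deriv (deriv f) σ + B) σ := by
    intro σ
    have h1 : HasDerivAt (fun τ : ℝ => deriv f τ - c) (deriv (deriv f) σ) σ :=
      ((hf' σ).hasDerivAt).sub_const c
    have h2 : HasDerivAt (fun τ : ℝ => B * τ) B σ := by
      simpa using (hasDerivAt_id σ).const_mul B
    exact h1.add h2
  have hgmono : Monotone g := by
    apply monotone_of_deriv_nonneg
    · intro τ; exact (hgderiv τ).differentiableAt
    · intro τ
      rw [(hgderiv τ).deriv]
      have := hXX τ; linarith
  have hg0 : g 0 = 0 := by simp [hg, hc]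
  have hgnn : ∀ τ : ℝ, 0 ≤ τ → 0 ≤ g τ := by
    intro τ hτ
    have := hgmono hτ
    rwa [hg0] at this
  set v : ℝ → ℝ := fun τ => f τ - c * τ + B * (τ ^ 2 / 2) with hv
  have hvderiv : ∀ τ : ℝ, HasDerivAt v (g τ) τ := by
    intro τ
    have h1 : HasDerivAt (fun τ : ℝ => c * τ) c τ := by
      simpa using (hasDerivAt_id τ).const_mul c
    have h2 : HasDerivAt (fun τ : ℝ => τ ^ 2 / 2) τ τ := by
      have := (hasDerivAt_pow 2 τ).div_const 2
      simpa using this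
    have h3 := (((hf τ).hasDerivAt).sub h1).add (h2.const_mul B)
    exact h3
  have hvmono : MonotoneOn v (Set.Ici (0 : ℝ)) := by
    apply monotoneOn_of_deriv_nonneg (convex_Ici 0)
    · exact (Continuous.continuousOn (by
        have : Differentiable ℝ v := fun τ => (hvderiv τ).differentiableAt
        exact this.continuous))
    · intro τ _; exact (hvderiv τ).differentiableAt.differentiableWithinAt
    · intro τ hτ
      rw [(hvderiv τ).deriv]
      exact hgnn τ (le_of_lt (by simpa using hτ))
  have h01 : v 0 ≤ v 1 := hvmono (by norm_num) (by norm_num) (by norm_num)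
  have hv0 : v 0 = f 0 := by simp [hv]
  have hv1 : v 1 = f 1 - c + B / 2 := by simp [hv]; ring
  have hb0 := abs_le.mp (hbd 0)
  have hb1 := abs_le.mp (hbd 1)
  have : c ≤ 2 * A + B / 2 := by
    rw [hv0, hv1] at h01; linarith [hb0.1, hb1.2]
  linarith

/-- Flow version of the radial-derivative bound.  Let `Φ` be the flow of a
complete vector field `X` on `M` and `φ` a function which is `C²` along the
flow lines, with `|φ| ≤ A`, with limits along each flow line as `τ → ±∞`, and
with `X(X(φ)) ≥ -B` (second derivative along the flow).  Then
`X(φ)(x) = d/dτ|₀ φ(Φ_τ x) ≤ 4A + B` for every `x`. -/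
theorem flow_derivative_bound {M : Type*} (Φ : ℝ → M → M)
    (hΦ0 : ∀ x, Φ 0 x = x) (hΦadd : ∀ s t x, Φ s (Φ t x) = Φ (s + t) x)
    (φ : M → ℝ) (A B : ℝ) (hA : 0 ≤ A) (hB : 0 ≤ B)
    (hC2 : ∀ x, ContDiff ℝ 2 (fun τ : ℝ => φ (Φ τ x)))
    (hbd : ∀ x, |φ x| ≤ A)
    (hlim_top : ∀ x, ∃ l, Filter.Tendsto (fun τ : ℝ => φ (Φ τ x)) Filter.atTop (nhds l))
    (hlim_bot : ∀ x, ∃ l, Filter.Tendsto (fun τ : ℝ => φ (Φ τ x)) Filter.atBot (nhds l))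
    (hXX : ∀ x (τ : ℝ), -B ≤ deriv (deriv (fun σ : ℝ => φ (Φ σ x))) τ) :
    ∀ x, deriv (fun τ : ℝ => φ (Φ τ x)) 0 ≤ 4 * A + B := by
  intro x
  exact aux_bound (fun τ => φ (Φ τ x)) A B hA hB (hC2 x) (fun τ => hbd _) (hXX x)
end
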